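/- Let G be a group satisfying hypothesis (H1), and let b be a positive integer such that the order of every finite subgroup of G divides b; set d = b·b!. Let C be an infinite cyclic subgroup of G and let dC = { x^d : x ∈ C } be the subgroup of d-th powers of elements of C. Then the index e := [C_G(dC) : dC] is finite, and for every nontrivial subgroup D of dC one has dC ≤ C_G(D) and [C_G(D) : dC] ≤ b·e². -/

import Mathlib

/-- A subgroup is infinite cyclic if it is infinite and generated by a single element. -/
def IsInfiniteCyclicSubgroup {G : Type*} [Group G] (C : Subgroup G) : Prop :=
  (∃ g : G, C = Subgroup.zpowers g) ∧ (C : Set G).Infinite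

/-- (H1): every infinite cyclic subgroup has finite index in its centralizer. -/
def HypH1 (G : Type*) [Group G] : Prop :=
  ∀ C : Subgroup G, IsInfiniteCyclicSubgroup C →
    C.relIndex (Subgroup.centralizer (C : Set G)) ≠ 0

section Aux

open Subgroup
open scoped commutatorElement

variable {G : Type*} [Group G]

private lemma aux_zpowers_isCyclic (c : G) : IsCyclic (Subgroup.zpowers c) := by
  refine ⟨⟨⟨c, mem_zpowers c⟩, ?_⟩⟩
  rintro ⟨x, hx⟩
  obtain ⟨n, rfl⟩ := Subgroup.mem_zpowers_iff.mp hx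
  exact ⟨n, by ext; simp⟩

private lemma aux_finOrder_of_zpow {c : G} {n : ℤ} (hn : n ≠ 0)
    (h : IsOfFinOrder (c ^ n)) : IsOfFinOrder c := by
  rcases Int.natAbs_eq n with h' | h'
  · rw [h', zpow_natCast] at h
    exact h.of_pow (by simpa using hn)
  · rw [h', zpow_neg, zpow_natCast] at h
    rw [isOfFinOrder_inv_iff] at h
    exact h.of_pow (by simpa using hn)

private lemma aux_infinite_cyclic_of_le {c : G} (hc : ¬ IsOfFinOrder c)
    {D : Subgroup G} (hD : D ≤ Subgroup.zpowers c) (hDbot : D ≠ ⊥) :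
    IsInfiniteCyclicSubgroup D := by
  constructor
  · haveI : IsCyclic (Subgroup.zpowers c) := aux_zpowers_isCyclic c
    haveI : IsCyclic (D.subgroupOf (Subgroup.zpowers c)) :=
      Subgroup.isCyclic (D.subgroupOf (Subgroup.zpowers c))
    haveI : IsCyclic D := isCyclic_of_surjective (Subgroup.subgroupOfEquivOfLe hD)
      (Subgroup.subgroupOfEquivOfLe hD).surjective
    obtain ⟨⟨x, hxD⟩, hx⟩ := IsCyclic.exists_generator (α := D)
    refine ⟨x, le_antisymm ?_ (Subgroup.zpowers_le.mpr hxD)⟩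
    intro z hz
    obtain ⟨n, hn⟩ := hx ⟨z, hz⟩
    have : x ^ n = z := by simpa [← Subgroup.coe_zpow] using congrArg Subtype.val hn
    exact Subgroup.mem_zpowers_iff.mpr ⟨n, this⟩
  · obtain ⟨⟨z, hzD⟩, hz1⟩ := Subgroup.ne_bot_iff_exists_ne_one.mp hDbot
    have hz1' : z ≠ 1 := by simpa [Subtype.ext_iff] using hz1
    obtain ⟨n, rfl⟩ := Subgroup.mem_zpowers_iff.mp (hD hzD)
    have hn : n ≠ 0 := by rintro rfl; simp at hz1'
    have hfo : ¬ IsOfFinOrder (c ^ n) := fun h => hc (aux_finOrder_of_zpow hn h)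
    have hle : Subgroup.zpowers (c ^ n) ≤ D := Subgroup.zpowers_le.mpr hzD
    exact (infinite_zpowers.mpr hfo).mono hle

private lemma aux_mem_centralizer_zpowers_iff {c w : G} :
    w ∈ Subgroup.centralizer (Subgroup.zpowers c : Set G) ↔ c * w = w * c := by
  rw [Subgroup.mem_centralizer_iff]
  constructor
  · exact fun h => h c (mem_zpowers c)
  · intro h h' hh'
    obtain ⟨n, rfl⟩ := Subgroup.mem_zpowers_iff.mp hh'
    exact (Commute.zpow_left h n)

private lemma aux_commutator_central_left {H : Type*} [Group H] (a b z : H)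
    (hz : z ∈ Subgroup.center H) : ⁅a * z, b⁆ = ⁅a, b⁆ := by
  have hz' : ∀ g : H, g * z = z * g := fun g => (Subgroup.mem_center_iff.mp hz g)
  have key : z * b * z⁻¹ = b := by
    rw [← hz' b]; exact mul_inv_cancel_right b z
  have h1 : (a * z) * b * (a * z)⁻¹ = a * (z * b * z⁻¹) * a⁻¹ := by group
  calc ⁅a * z, b⁆ = (a * z) * b * (a * z)⁻¹ * b⁻¹ := commutatorElement_def _ _
    _ = a * (z * b * z⁻¹) * a⁻¹ * b⁻¹ := by rw [h1]
    _ = a * b * a⁻¹ * b⁻¹ := by rw [key]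
    _ = ⁅a, b⁆ := (commutatorElement_def _ _).symm

private lemma aux_finite_commutatorSet {H : Type*} [Group H]
    [Finite (H ⧸ Subgroup.center H)] : Finite (commutatorSet H) := by
  have key : ∀ x y : H, ⁅x, y⁆ =
      ⁅(QuotientGroup.mk (s := Subgroup.center H) x).out,
        (QuotientGroup.mk (s := Subgroup.center H) y).out⁆ := by
    intro x y
    set u := (QuotientGroup.mk (s := Subgroup.center H) x).out with hu
    set v := (QuotientGroup.mk (s := Subgroup.center H) y).out with hv
    have hxu : u⁻¹ * x ∈ Subgroup.center H := by
      apply QuotientGroup.eq.mp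
      rw [hu, QuotientGroup.out_eq']
    have hyv : v⁻¹ * y ∈ Subgroup.center H := by
      apply QuotientGroup.eq.mp
      rw [hv, QuotientGroup.out_eq']
    have hx : x = u * (u⁻¹ * x) := by group
    have hy : y = v * (v⁻¹ * y) := by group
    calc ⁅x, y⁆ = ⁅u * (u⁻¹ * x), y⁆ := by rw [← hx]
      _ = ⁅u, y⁆ := aux_commutator_central_left _ _ _ hxu
      _ = ⁅y, u⁆⁻¹ := by rw [commutatorElement_inv]
      _ = ⁅v * (v⁻¹ * y), u⁆⁻¹ := by rw [← hy]
      _ = ⁅v, u⁆⁻¹ := by rw [aux_commutator_central_left _ _ _ hyv]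
      _ = ⁅u, v⁆ := by rw [commutatorElement_inv]
  have hsub : commutatorSet H ⊆ Set.range
      (fun p : (H ⧸ Subgroup.center H) × (H ⧸ Subgroup.center H) => ⁅p.1.out, p.2.out⁆) := by
    rintro _ ⟨x, y, rfl⟩
    exact ⟨(QuotientGroup.mk x, QuotientGroup.mk y), (key x y).symm⟩
  exact ((Set.finite_range _).subset hsub).to_subtype

end Aux

open scoped commutatorElement

/-- Let `G` satisfy (H1), let `b > 0` be such that the order of every finite subgroup of
`G` divides `b`, and put `d = b * b!`. If `C` is an infinite cyclic subgroup of `G` and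
`dC` is the subgroup of `d`-th powers of elements of `C`, then the index
`e = [C_G(dC) : dC]` is finite, and every nontrivial subgroup `D` of `dC` satisfies
`dC ≤ C_G(D)` and `[C_G(D) : dC] ≤ b * e²`. -/
theorem index_of_centralizer_bound
    {G : Type*} [Group G] (h1 : HypH1 G)
    (b : ℕ) (hb : 0 < b)
    (hdiv : ∀ H : Subgroup G, (H : Set G).Finite → Nat.card H ∣ b)
    (d : ℕ) (hd : d = b * Nat.factorial b)
    (C : Subgroup G) (hC : IsInfiniteCyclicSubgroup C)
    (dC : Subgroup G) (hdC : (dC : Set G) = (fun x : G => x ^ d) '' (C : Set G)) :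
    dC.relIndex (Subgroup.centralizer (dC : Set G)) ≠ 0 ∧
    ∀ D : Subgroup G, D ≠ ⊥ → D ≤ dC →
      dC ≤ Subgroup.centralizer (D : Set G) ∧
      dC.relIndex (Subgroup.centralizer (D : Set G)) ≤
        b * (dC.relIndex (Subgroup.centralizer (dC : Set G))) ^ 2 := by
  classical
  obtain ⟨⟨g, rfl⟩, hCinf⟩ := hC
  have hg : ¬ IsOfFinOrder g := infinite_zpowers.mp hCinf
  have hd0 : d ≠ 0 := by
    rw [hd]
    exact Nat.mul_ne_zero hb.ne' (Nat.factorial_pos b).ne'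
  set c : G := g ^ d with hc_def
  have hc : ¬ IsOfFinOrder c := fun h => hg (h.of_pow hd0)
  -- dC = zpowers c
  have hdCc : dC = Subgroup.zpowers c := by
    apply SetLike.ext'
    rw [hdC]
    ext x
    constructor
    · rintro ⟨y, hy, rfl⟩
      obtain ⟨n, rfl⟩ := Subgroup.mem_zpowers_iff.mp hy
      refine Subgroup.mem_zpowers_iff.mpr ⟨n, ?_⟩
      simp only [hc_def, ← zpow_natCast, ← zpow_mul]
      rw [mul_comm]
    · intro hx
      obtain ⟨n, rfl⟩ := Subgroup.mem_zpowers_iff.mp hx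
      refine ⟨g ^ n, Subgroup.mem_zpowers_iff.mpr ⟨n, rfl⟩, ?_⟩
      simp only [hc_def, ← zpow_natCast, ← zpow_mul]
      rw [mul_comm]
  subst hdCc
  -- Part 1
  have hdCcyc : IsInfiniteCyclicSubgroup (Subgroup.zpowers c) :=
    ⟨⟨c, rfl⟩, infinite_zpowers.mpr hc⟩
  have h1dC := h1 _ hdCcyc
  refine ⟨h1dC, ?_⟩
  intro D hDbot hDle
  -- dC centralizes D
  have hstepA : ∀ E : Subgroup G, E ≤ Subgroup.zpowers c →
      Subgroup.zpowers c ≤ Subgroup.centralizer (E : Set G) := by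
    intro E hE z hz
    rw [Subgroup.mem_centralizer_iff]
    intro h hh
    obtain ⟨m, rfl⟩ := Subgroup.mem_zpowers_iff.mp (hE hh)
    obtain ⟨n, rfl⟩ := Subgroup.mem_zpowers_iff.mp hz
    rw [← zpow_add, ← zpow_add, add_comm]
  have hdCcent : Subgroup.zpowers c ≤ Subgroup.centralizer (D : Set G) := hstepA D hDle
  refine ⟨hdCcent, ?_⟩
  -- notation
  set Z : Subgroup G := Subgroup.centralizer ((Subgroup.zpowers c : Subgroup G) : Set G) with hZ
  set KG : Subgroup G := Subgroup.centralizer (D : Set G) with hKG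
  set e : ℕ := (Subgroup.zpowers c).relIndex Z with he
  -- D is infinite cyclic, so K = C_G(D) has finite index over D
  have hDcyc : IsInfiniteCyclicSubgroup D := aux_infinite_cyclic_of_le hc hDle hDbot
  have hKfin : D.relIndex KG ≠ 0 := h1 D hDcyc
  -- D ≤ KG
  have hDKG : D ≤ KG := le_trans hDle hdCcent
  -- the subgroup D, inside KG, is central
  have hcen : D.subgroupOf KG ≤ Subgroup.center ↥KG := by
    rintro ⟨x, hxK⟩ hx
    rw [Subgroup.mem_subgroupOf] at hx
    rw [Subgroup.mem_center_iff]
    intro y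
    ext
    push_cast
    exact (Subgroup.mem_centralizer_iff.mp y.2 x hx).symm
  have hcenfin : (Subgroup.center ↥KG).index ≠ 0 := by
    have hdvd : (Subgroup.center ↥KG).index ∣ (D.subgroupOf KG).index :=
      Subgroup.index_dvd_of_le hcen
    exact ne_zero_of_dvd_ne_zero hKfin hdvd
  haveI : (Subgroup.center ↥KG).FiniteIndex := ⟨hcenfin⟩
  haveI : Finite (↥KG ⧸ Subgroup.center ↥KG) := Subgroup.finite_quotient_of_finiteIndex
  haveI : Finite (commutatorSet ↥KG) := aux_finite_commutatorSet
  haveI : Finite (_root_.commutator ↥KG) := inferInstance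
  -- the commutator subgroup of KG, as a subgroup of G
  set Kc : Subgroup G := (_root_.commutator ↥KG).map KG.subtype with hKc
  have hKcfin : (Kc : Set G).Finite := by
    rw [hKc, Subgroup.coe_map]
    exact Set.Finite.image _ (Set.toFinite _)
  haveI : Finite ↥Kc := hKcfin.to_subtype
  have hKcb : Nat.card Kc ≤ b := Nat.le_of_dvd hb (hdiv Kc hKcfin)
  -- M = elements of KG centralizing dC
  set M : Subgroup G := KG ⊓ Z with hM
  have hcKG : c ∈ KG := hdCcent (Subgroup.mem_zpowers c)
  have hdCM : Subgroup.zpowers c ≤ M :=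
    le_inf hdCcent (hstepA _ le_rfl)
  -- key bound : [KG : M] ≤ |Kc| ≤ b
  have hMKG : M.relIndex KG ≤ Nat.card Kc := by
    have hFdef : ∀ x : ↥KG, ((x : G) * c * (x : G)⁻¹ * c⁻¹) ∈ Kc := by
      intro x
      refine ⟨⁅x, (⟨c, hcKG⟩ : ↥KG)⁆, Subgroup.commutator_mem_commutator
        (Subgroup.mem_top _) (Subgroup.mem_top _), ?_⟩
      simp [commutatorElement_def]
    set F : ↥KG → ↥Kc := fun x => ⟨(x : G) * c * (x : G)⁻¹ * c⁻¹, hFdef x⟩ with hF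
    have hkey : ∀ x y : ↥KG, F x = F y ↔ x⁻¹ * y ∈ M.subgroupOf KG := by
      intro x y
      have hmemKG : ((x⁻¹ * y : ↥KG) : G) ∈ KG := SetLike.coe_mem _
      rw [Subgroup.mem_subgroupOf]
      have hcoe : ((x⁻¹ * y : ↥KG) : G) = (x : G)⁻¹ * (y : G) := by
        push_cast; ring_nf
      rw [hM, Subgroup.mem_inf]
      constructor
      · intro hxy
        have h0 : (x : G) * c * (x : G)⁻¹ * c⁻¹ = (y : G) * c * (y : G)⁻¹ * c⁻¹ :=
          congrArg Subtype.val hxy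
        have h1 : (x : G) * c * (x : G)⁻¹ = (y : G) * c * (y : G)⁻¹ :=
          mul_right_cancel h0
        refine ⟨hmemKG, ?_⟩
        rw [hZ, aux_mem_centralizer_zpowers_iff, hcoe]
        calc c * ((x : G)⁻¹ * (y : G))
            = (x : G)⁻¹ * ((x : G) * c * (x : G)⁻¹) * (y : G) := by group
          _ = (x : G)⁻¹ * ((y : G) * c * (y : G)⁻¹) * (y : G) := by rw [h1]
          _ = ((x : G)⁻¹ * (y : G)) * c := by group
      · rintro ⟨-, hz⟩
        rw [hZ, aux_mem_centralizer_zpowers_iff, hcoe] at hz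
        apply Subtype.ext
        show (x : G) * c * (x : G)⁻¹ * c⁻¹ = (y : G) * c * (y : G)⁻¹ * c⁻¹
        have h1 : (x : G) * c * (x : G)⁻¹ = (y : G) * c * (y : G)⁻¹ := by
          calc (x : G) * c * (x : G)⁻¹
              = (x : G) * (c * ((x : G)⁻¹ * (y : G))) * (y : G)⁻¹ := by group
            _ = (x : G) * (((x : G)⁻¹ * (y : G)) * c) * (y : G)⁻¹ := by rw [hz]
            _ = (y : G) * c * (y : G)⁻¹ := by group
        rw [h1]
    -- build the injection on the quotient
    have hwd : ∀ x y : ↥KG,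
        (QuotientGroup.leftRel (M.subgroupOf KG)) x y → F x = F y := by
      intro x y hxy
      rw [QuotientGroup.leftRel_apply] at hxy
      exact (hkey x y).mpr hxy
    let Fbar : (↥KG ⧸ M.subgroupOf KG) → ↥Kc := Quotient.lift F hwd
    have hinj : Function.Injective Fbar := by
      intro q₁ q₂
      induction q₁ using QuotientGroup.induction_on
      induction q₂ using QuotientGroup.induction_on
      rename_i x y
      intro hxy
      have : F x = F y := hxy
      exact (QuotientGroup.eq).mpr ((hkey x y).mp this)
    calc M.relIndex KG = Nat.card (↥KG ⧸ M.subgroupOf KG) :=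
          Subgroup.index_eq_card _
      _ ≤ Nat.card ↥Kc := Nat.card_le_card_of_injective Fbar hinj
  -- index arithmetic
  have hprod : (Subgroup.zpowers c).relIndex M * M.relIndex KG =
      (Subgroup.zpowers c).relIndex KG :=
    Subgroup.relIndex_mul_relIndex _ _ _ hdCM inf_le_left
  have hprodZ : (Subgroup.zpowers c).relIndex M * M.relIndex Z = e :=
    Subgroup.relIndex_mul_relIndex _ _ _ hdCM inf_le_right
  have hMle : (Subgroup.zpowers c).relIndex M ≤ e :=
    Nat.le_of_dvd (Nat.pos_of_ne_zero h1dC) ⟨M.relIndex Z, hprodZ.symm⟩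
  have he1 : 1 ≤ e := Nat.pos_of_ne_zero h1dC
  calc (Subgroup.zpowers c).relIndex KG
      = (Subgroup.zpowers c).relIndex M * M.relIndex KG := hprod.symm
    _ ≤ e * b := Nat.mul_le_mul hMle (le_trans hMKG hKcb)
    _ = b * e := mul_comm e b
    _ ≤ b * e ^ 2 := by
        apply Nat.mul_le_mul_left
        calc e = e * 1 := (mul_one e).symm
          _ ≤ e * e := Nat.mul_le_mul_left e he1
          _ = e ^ 2 := (sq e).symm
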